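/- arXiv:2410.02348 — 3 statements merged into one kernel-verified Lean document; each statement's English description precedes it below -/
import Mathlib

section
/- (Gradient upper bound for the linearized network.) In the same setting, ‖∇L(θ)‖^2 ≤ (Σ_{i∈I} (a_i^2 + ‖w_i‖^2)) · λ_max(Σ_n) · ‖β̂ - β_n‖_{Σ_n}^2, where λ_max denotes the largest eigenvalue of Σ_n. -/
open Matrix

lemma key_spectral {d : ℕ} {A : Matrix (Fin d) (Fin d) ℝ} (hA : A.PosSemidef)
    (v : Fin d → ℝ) (hd : 0 < d) :
    (A *ᵥ v) ⬝ᵥ (A *ᵥ v) ≤ (⨆ i, hA.1.eigenvalues i) * (v ⬝ᵥ (A *ᵥ v)) := by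
  have : Nonempty (Fin d) := ⟨⟨0, hd⟩⟩
  set hH := hA.1 with hHdef
  set U : Matrix (Fin d) (Fin d) ℝ := (hH.eigenvectorUnitary : Matrix (Fin d) (Fin d) ℝ) with hU
  set lam := hH.eigenvalues with hlam
  have hstarU : star U = Uᵀ := by
    rw [Matrix.star_eq_conjTranspose, Matrix.conjTranspose_eq_transpose_of_trivial]
  have hUstarU : star U * U = 1 := by
    exact_mod_cast Unitary.coe_star_mul_self hH.eigenvectorUnitary
  have hspec : A = U * Matrix.diagonal lam * star U := by
    have := hH.spectral_theorem
    simpa using this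
  set c : Fin d → ℝ := star U *ᵥ v with hc
  have hgen : ∀ f : Fin d → ℝ,
      v ⬝ᵥ ((U * Matrix.diagonal f * star U) *ᵥ v) = ∑ i, f i * (c i) ^ 2 := by
    intro f
    rw [← Matrix.mulVec_mulVec, ← Matrix.mulVec_mulVec, Matrix.dotProduct_mulVec v U,
      ← Matrix.mulVec_transpose, ← hstarU, ← hc]
    simp only [Matrix.mulVec_diagonal, dotProduct, sq]
    exact Finset.sum_congr rfl fun i _ => by ring
  have h1 : v ⬝ᵥ (A *ᵥ v) = ∑ i, lam i * (c i) ^ 2 := by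
    rw [hspec]; exact hgen lam
  have hAA : A * A = U * Matrix.diagonal (fun i => lam i * lam i) * star U := by
    rw [hspec]
    rw [show U * Matrix.diagonal lam * star U * (U * Matrix.diagonal lam * star U)
        = U * (Matrix.diagonal lam * ((star U * U) * Matrix.diagonal lam)) * star U by
      simp only [mul_assoc]]
    rw [hUstarU, one_mul, Matrix.diagonal_mul_diagonal]
  have h2 : (A *ᵥ v) ⬝ᵥ (A *ᵥ v) = ∑ i, (lam i * lam i) * (c i) ^ 2 := by
    have hAsymm : Aᵀ = A := by
      rw [← Matrix.conjTranspose_eq_transpose_of_trivial]; exact hH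
    calc (A *ᵥ v) ⬝ᵥ (A *ᵥ v) = v ⬝ᵥ ((A * A) *ᵥ v) := by
          rw [← Matrix.mulVec_mulVec, Matrix.dotProduct_mulVec v A, ← Matrix.mulVec_transpose,
            hAsymm, dotProduct_comm]
      _ = ∑ i, (lam i * lam i) * (c i) ^ 2 := by rw [hAA]; exact hgen _
  rw [h1, h2, Finset.mul_sum]
  apply Finset.sum_le_sum
  intro i _
  have hnn : 0 ≤ lam i := hA.eigenvalues_nonneg i
  have hle : lam i ≤ ⨆ j, lam j := le_ciSup (Set.Finite.bddAbove (Set.finite_range _)) i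
  have := mul_le_mul_of_nonneg_right (mul_le_mul_of_nonneg_right hle hnn) (sq_nonneg (c i))
  calc lam i * lam i * c i ^ 2 ≤ (⨆ j, lam j) * lam i * c i ^ 2 := this
    _ = (⨆ j, lam j) * (lam i * c i ^ 2) := by ring

/-- Gradient upper bound for the linearized network:
`‖∇L(θ)‖² ≤ (∑ (a_i² + ‖w_i‖²)) λ_max(Σ_n) ‖β̂ - β_n‖²_{Σ_n}`. -/
theorem gradient_upper_bound_linearized {d n : ℕ} (hn : 0 < n) (hd : 0 < d)
    {I : Type*} [Fintype I]
    (X : Matrix (Fin d) (Fin n) ℝ) (y : Fin n → ℝ) [Invertible (X * Xᵀ)]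
    (hH : ((1 / (n : ℝ)) • (X * Xᵀ)).IsHermitian)
    (a : I → ℝ) (w : I → Fin d → ℝ) :
    let βn : Fin d → ℝ := (X * Xᵀ)⁻¹ *ᵥ (X *ᵥ y)
    let Sn : Matrix (Fin d) (Fin d) ℝ := (1 / (n : ℝ)) • (X * Xᵀ)
    let βhat : Fin d → ℝ := ∑ i, a i • w i
    let Dv : Fin d → ℝ := Sn *ᵥ (βhat - βn)
    let gradsq : ℝ := (∑ i, (w i ⬝ᵥ Dv) ^ 2) + ∑ i, (a i) ^ 2 * (Dv ⬝ᵥ Dv)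
    let lammax : ℝ := ⨆ i, hH.eigenvalues i
    gradsq ≤ (∑ i, ((a i) ^ 2 + w i ⬝ᵥ w i)) * lammax *
      ((βhat - βn) ⬝ᵥ (Sn *ᵥ (βhat - βn))) := by
  intro βn Sn βhat Dv gradsq lammax
  have hXXt : (X * Xᵀ).PosSemidef := by
    have h := Matrix.posSemidef_self_mul_conjTranspose X
    rwa [Matrix.conjTranspose_eq_transpose_of_trivial] at h
  have hPSD : Sn.PosSemidef := by
    refine Matrix.posSemidef_iff_dotProduct_mulVec.mpr ⟨hH, fun x => ?_⟩
    have h0 := hXXt.dotProduct_mulVec_nonneg x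
    show (0:ℝ) ≤ star x ⬝ᵥ ((1 / (n : ℝ)) • (X * Xᵀ)) *ᵥ x
    rw [Matrix.smul_mulVec, dotProduct_smul]
    have hn' : (0:ℝ) ≤ 1 / (n:ℝ) := by positivity
    exact mul_nonneg hn' h0
  set v : Fin d → ℝ := βhat - βn with hv
  have hkey : Dv ⬝ᵥ Dv ≤ lammax * (v ⬝ᵥ (Sn *ᵥ v)) := key_spectral hPSD v hd
  have hCS : ∀ i, (w i ⬝ᵥ Dv) ^ 2 ≤ (w i ⬝ᵥ w i) * (Dv ⬝ᵥ Dv) := fun i => by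
    have h := Finset.sum_mul_sq_le_sq_mul_sq Finset.univ (w i) Dv
    simpa only [dotProduct, pow_two] using h
  have hSnonneg : (0:ℝ) ≤ ∑ i, ((a i) ^ 2 + w i ⬝ᵥ w i) := by
    refine Finset.sum_nonneg fun i _ => add_nonneg (sq_nonneg _) ?_
    exact Finset.sum_nonneg fun j _ => mul_self_nonneg _
  calc gradsq ≤ (∑ i, (w i ⬝ᵥ w i) * (Dv ⬝ᵥ Dv)) + ∑ i, (a i) ^ 2 * (Dv ⬝ᵥ Dv) :=
        add_le_add (Finset.sum_le_sum fun i _ => hCS i) le_rfl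
    _ = (∑ i, ((a i) ^ 2 + w i ⬝ᵥ w i)) * (Dv ⬝ᵥ Dv) := by
        rw [Finset.sum_mul, ← Finset.sum_add_distrib]
        exact Finset.sum_congr rfl fun i _ => by ring
    _ ≤ (∑ i, ((a i) ^ 2 + w i ⬝ᵥ w i)) * (lammax * (v ⬝ᵥ (Sn *ᵥ v))) :=
        mul_le_mul_of_nonneg_left hkey hSnonneg
    _ = (∑ i, ((a i) ^ 2 + w i ⬝ᵥ w i)) * lammax * (v ⬝ᵥ (Sn *ᵥ v)) := by ring
end

section
/- Let f : ℝ≥0 → ℝ be differentiable with f'(t) ≥ a^2 - f(t)^2 for all t, where a > 0, and suppose f(0) ∈ (-a, a). Then for all t ≥ 0, f(t) ≥ a·tanh(a(t + t_0)), where t_0 ∈ ℝ is defined by f(0) = a·tanh(a·t_0). -/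
lemma tanh_hasDerivAt (y : ℝ) :
    HasDerivAt Real.tanh (1 - Real.tanh y ^ 2) y := by
  have hc : Real.cosh y ≠ 0 := (Real.cosh_pos y).ne'
  have h := (Real.hasDerivAt_sinh y).div (Real.hasDerivAt_cosh y) hc
  have heq : (Real.cosh y * Real.cosh y - Real.sinh y * Real.sinh y) / Real.cosh y ^ 2
      = 1 - Real.tanh y ^ 2 := by
    have h1 : Real.cosh y ^ 2 - Real.sinh y ^ 2 = 1 := Real.cosh_sq_sub_sinh_sq y
    rw [Real.tanh_eq_sinh_div_cosh]
    field_simp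
  have : (Real.sinh / Real.cosh) = Real.tanh := by
    funext z; rw [Pi.div_apply, Real.tanh_eq_sinh_div_cosh]
  rw [this, heq] at h
  exact h

lemma g_hasDerivAt (a t₀ : ℝ) (x : ℝ) :
    HasDerivAt (fun x => a * Real.tanh (a * (x + t₀)))
      (a ^ 2 - (a * Real.tanh (a * (x + t₀))) ^ 2) x := by
  have h1 : HasDerivAt (fun x : ℝ => a * (x + t₀)) a x := by
    simpa using (((hasDerivAt_id x).add_const t₀).const_mul a)
  have h2 := (tanh_hasDerivAt (a * (x + t₀))).comp x h1
  have h3 := h2.const_mul a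
  convert h3 using 1
  · rfl
  · rfl
  · rfl
  · ring

/-- Grönwall-type comparison with the Riccati equation `g' = a² - g²`:
if `f' ≥ a² - f²`, `f(0) ∈ (-a, a)` and `f(0) = a tanh(a t₀)`, then
`f(t) ≥ a tanh(a (t + t₀))` for all `t ≥ 0`. -/
theorem riccati_comparison (f f' : ℝ → ℝ) (a t₀ : ℝ) (ha : 0 < a)
    (hderiv : ∀ t, 0 ≤ t → HasDerivAt f (f' t) t)
    (hineq : ∀ t, 0 ≤ t → a ^ 2 - f t ^ 2 ≤ f' t)
    (hinit : f 0 ∈ Set.Ioo (-a) a)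
    (ht₀ : f 0 = a * Real.tanh (a * t₀)) :
    ∀ t, 0 ≤ t → a * Real.tanh (a * (t + t₀)) ≤ f t := by
  set g : ℝ → ℝ := fun x => a * Real.tanh (a * (x + t₀)) with hg_def
  intro t ht
  -- continuity facts on [0, t]
  have hfc : ContinuousOn f (Set.Icc 0 t) := fun x hx =>
    (hderiv x hx.1).continuousAt.continuousWithinAt
  have hgc : Continuous g :=
    continuous_iff_continuousAt.2 fun x => (g_hasDerivAt a t₀ x).continuousAt
  -- a bound C₀ on -(f + g) on [0, t]
  have hne : (Set.Icc (0:ℝ) t).Nonempty := ⟨0, le_refl 0, ht⟩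
  obtain ⟨x₀, hx₀, hmax'⟩ := (isCompact_Icc).exists_isMaxOn hne
    ((hfc.add hgc.continuousOn).neg)
  have hmax : ∀ x ∈ Set.Icc (0:ℝ) t, -(f x + g x) ≤ -(f x₀ + g x₀) := fun x hx => hmax' hx
  set C₀ : ℝ := -(f x₀ + g x₀) with hC₀
  set C : ℝ := C₀ + 1 with hC
  -- for every ε > 0 we get the perturbed bound
  have key : ∀ ε : ℝ, 0 < ε → g t - f t ≤ ε * Real.exp (C * t) := by
    intro ε hε
    set B : ℝ → ℝ := fun x => -(g x) + ε * Real.exp (C * x) with hB_def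
    set B' : ℝ → ℝ := fun x => -(a ^ 2 - g x ^ 2) + ε * (Real.exp (C * x) * C) with hB'_def
    have hB : ∀ x, HasDerivAt B (B' x) x := by
      intro x
      have h1 : HasDerivAt (fun x : ℝ => C * x) C x := by
        simpa using (hasDerivAt_id x).const_mul C
      exact ((g_hasDerivAt a t₀ x).neg).add ((h1.exp).const_mul ε)
    have hFc : ContinuousOn (fun x => -f x) (Set.Icc 0 t) := hfc.neg
    have hF' : ∀ x ∈ Set.Ico (0:ℝ) t, HasDerivWithinAt (fun x => -f x) (-(f' x)) (Set.Ici x) x :=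
      fun x hx => ((hderiv x hx.1).neg).hasDerivWithinAt
    have ha0 : -f 0 ≤ B 0 := by
      have : g 0 = f 0 := by simp [hg_def, ht₀]
      simp only [hB_def, mul_zero, Real.exp_zero, mul_one, this]
      linarith
    have bound : ∀ x ∈ Set.Ico (0:ℝ) t, -f x = B x → -(f' x) < B' x := by
      intro x hx hcontact
      have hfx : f x = g x - ε * Real.exp (C * x) := by
        simp only [hB_def] at hcontact; linarith
      have h1 : a ^ 2 - f x ^ 2 ≤ f' x := hineq x hx.1
      have h2 : -(f x + g x) ≤ C₀ := hmax x ⟨hx.1, hx.2.le⟩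
      have hex : 0 < Real.exp (C * x) := Real.exp_pos _
      have h3 : f x ^ 2 - g x ^ 2 = ε * Real.exp (C * x) * (-(f x + g x)) := by
        rw [hfx]; ring
      have h4 : f x ^ 2 - g x ^ 2 < ε * (Real.exp (C * x) * C) := by
        rw [h3, hC]
        have := mul_le_mul_of_nonneg_left h2 (le_of_lt (mul_pos hε hex))
        nlinarith
      simp only [hB'_def]
      nlinarith
    have := image_le_of_deriv_right_lt_deriv_boundary hFc hF' ha0 hB bound
      (Set.right_mem_Icc.2 ht)
    simp only [hB_def] at this
    linarith
  -- let ε → 0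
  by_contra h
  push_neg at h
  have hδ : 0 < g t - f t := by simpa [hg_def] using sub_pos.2 h
  have hex : 0 < Real.exp (C * t) := Real.exp_pos _
  have := key ((g t - f t) / (2 * Real.exp (C * t))) (by positivity)
  rw [div_mul_eq_mul_div, mul_comm] at this
  have h2 : Real.exp (C * t) * (g t - f t) / (2 * Real.exp (C * t)) = (g t - f t) / 2 := by
    field_simp
  rw [h2] at this
  linarith
end

section
/- In the setting of the previous decoupled dynamics, if additionally Σ_n is positive definite and Σ_{i∈I} a_i(t)^2 ≥ ε₂ > 0 for all t in an interval [t₀, t₁], then ‖β̂(t) - β_n‖_{Σ_n}^2 ≤ ‖β̂(t₀) - β_n‖_{Σ_n}^2 · e^{-2 ε₂ λ_min(Σ_n) (t - t₀)} for all t ∈ [t₀, t₁]. -/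
open Matrix

lemma my_eigen_bound {d : ℕ} {Sn : Matrix (Fin d) (Fin d) ℝ} (hpd : Sn.PosDef) (x : Fin d → ℝ) :
    (⨅ i, hpd.1.eigenvalues i) * (x ⬝ᵥ (Sn *ᵥ x)) ≤ (Sn *ᵥ x) ⬝ᵥ (Sn *ᵥ x) := by
  classical
  set lam := hpd.1.eigenvalues with hlam
  set U : Matrix (Fin d) (Fin d) ℝ := (Matrix.IsHermitian.eigenvectorUnitary hpd.1 : Matrix (Fin d) (Fin d) ℝ) with hU
  have hstar : star U * U = 1 := by
    simpa [hU] using (Matrix.mem_unitaryGroup_iff'.mp (Matrix.IsHermitian.eigenvectorUnitary hpd.1).2)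
  have hspec : Sn = U * Matrix.diagonal lam * star U := by
    have := hpd.1.spectral_theorem
    simpa [hU, hlam, Function.comp] using this
  set z : Fin d → ℝ := star U *ᵥ x with hz
  have hUT : star U = Uᵀ := by
    ext i j; simp [Matrix.star_eq_conjTranspose, Matrix.conjTranspose_apply]
  have hxU : x ᵥ* U = z := by
    rw [hz, hUT, Matrix.mulVec_transpose]
  have hdiagz : Matrix.diagonal lam *ᵥ z = fun i => lam i * z i := by
    funext i; simp [Matrix.mulVec_diagonal]
  have hSx : Sn *ᵥ x = U *ᵥ (fun i => lam i * z i) := by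
    rw [hspec, ← Matrix.mulVec_mulVec, ← Matrix.mulVec_mulVec, ← hz, hdiagz]
  have claim1 : x ⬝ᵥ (Sn *ᵥ x) = ∑ i, lam i * z i ^ 2 := by
    rw [hSx, Matrix.dotProduct_mulVec, hxU]
    simp [dotProduct]
    exact Finset.sum_congr rfl fun i _ => by ring
  have claim2 : (Sn *ᵥ x) ⬝ᵥ (Sn *ᵥ x) = ∑ i, lam i ^ 2 * z i ^ 2 := by
    rw [hSx, Matrix.dotProduct_mulVec]
    have : (U *ᵥ fun i => lam i * z i) ᵥ* U = fun i => lam i * z i := by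
      rw [← Matrix.mulVec_transpose, ← hUT, Matrix.mulVec_mulVec, hstar, Matrix.one_mulVec]
    rw [this]
    simp [dotProduct]
    exact Finset.sum_congr rfl fun i _ => by ring
  rw [claim1, claim2, Finset.mul_sum]
  refine Finset.sum_le_sum fun i _ => ?_
  have h1 : (⨅ j, lam j) ≤ lam i := ciInf_le (Set.Finite.bddBelow (Set.finite_range _)) i
  have h2 : (0:ℝ) ≤ lam i * z i ^ 2 := mul_nonneg (hpd.eigenvalues_pos i).le (sq_nonneg _)
  calc (⨅ j, lam j) * (lam i * z i ^ 2) ≤ lam i * (lam i * z i ^ 2) :=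
        mul_le_mul_of_nonneg_right h1 h2
    _ = lam i ^ 2 * z i ^ 2 := by ring

lemma my_M_bound {d : ℕ} {I : Type*} [Fintype I] (s ε₂ : ℝ) (hs : ε₂ ≤ s)
    (w : I → Fin d → ℝ) (y : Fin d → ℝ) :
    ε₂ * (y ⬝ᵥ y) ≤ ((s • (1 : Matrix (Fin d) (Fin d) ℝ) + ∑ i, vecMulVec (w i) (w i)) *ᵥ y) ⬝ᵥ y := by
  have hynn : (0:ℝ) ≤ y ⬝ᵥ y := by
    simp only [dotProduct]
    exact Finset.sum_nonneg fun i _ => mul_self_nonneg _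
  have hW : ∀ u : Fin d → ℝ, (vecMulVec u u *ᵥ y) ⬝ᵥ y = (u ⬝ᵥ y) * (u ⬝ᵥ y) := by
    intro u
    have h : vecMulVec u u *ᵥ y = fun i => u i * (u ⬝ᵥ y) := by
      funext i
      simp [Matrix.mulVec, Matrix.vecMulVec_apply, dotProduct, Finset.mul_sum, mul_assoc]
    rw [h]
    simp only [dotProduct]
    rw [Finset.sum_mul]
    exact Finset.sum_congr rfl fun i _ => by ring
  have hsum : ((∑ i, vecMulVec (w i) (w i)) *ᵥ y) ⬝ᵥ y = ∑ i, ((w i ⬝ᵥ y) * (w i ⬝ᵥ y)) := by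
    have hms : (∑ i, vecMulVec (w i) (w i)) *ᵥ y = ∑ i, (vecMulVec (w i) (w i) *ᵥ y) :=
      map_sum (Matrix.mulVec.addMonoidHomLeft y) _ _
    have hds : (∑ i, (vecMulVec (w i) (w i) *ᵥ y)) ⬝ᵥ y = ∑ i, (vecMulVec (w i) (w i) *ᵥ y) ⬝ᵥ y := by
      simp only [dotProduct, Finset.sum_apply, Finset.sum_mul]
      exact Finset.sum_comm
    rw [hms, hds]
    exact Finset.sum_congr rfl fun i _ => hW (w i)
  rw [Matrix.add_mulVec, add_dotProduct, hsum]
  have h1 : ((s • (1 : Matrix (Fin d) (Fin d) ℝ)) *ᵥ y) ⬝ᵥ y = s * (y ⬝ᵥ y) := by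
    rw [Matrix.smul_mulVec, Matrix.one_mulVec, smul_dotProduct, smul_eq_mul]
  rw [h1]
  have h2 : (0:ℝ) ≤ ∑ i, ((w i ⬝ᵥ y) * (w i ⬝ᵥ y)) :=
    Finset.sum_nonneg fun i _ => mul_self_nonneg _
  nlinarith [mul_le_mul_of_nonneg_right hs hynn]

/-- Exponential decay under the decoupled dynamics: if `Σ_n` is positive definite and
`∑ a_i(t)² ≥ ε₂ > 0` on `[t₀, t₁]`, then
`‖β̂(t) - β_n‖²_{Σ_n} ≤ ‖β̂(t₀) - β_n‖²_{Σ_n} e^{-2 ε₂ λ_min(Σ_n)(t - t₀)}`. -/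
theorem decoupled_dynamics_exponential_decay {d : ℕ} {I : Type*} [Fintype I]
    (a : I → ℝ → ℝ) (w : I → ℝ → Fin d → ℝ)
    (Sn : Matrix (Fin d) (Fin d) ℝ) (βn : Fin d → ℝ)
    (hpd : Sn.PosDef)
    (βhat : ℝ → Fin d → ℝ)
    (hβhat : ∀ t, βhat t = ∑ i, a i t • w i t)
    (hODE : ∀ t, HasDerivAt βhat
      (-((((∑ i, a i t ^ 2) • (1 : Matrix (Fin d) (Fin d) ℝ)
          + ∑ i, vecMulVec (w i t) (w i t))) *ᵥ (Sn *ᵥ (βhat t - βn)))) t)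
    (t₀ t₁ ε₂ : ℝ) (hε₂ : 0 < ε₂)
    (hgrow : ∀ t ∈ Set.Icc t₀ t₁, ε₂ ≤ ∑ i, a i t ^ 2) :
    let lammin : ℝ := ⨅ i, hpd.1.eigenvalues i
    ∀ t ∈ Set.Icc t₀ t₁,
      (βhat t - βn) ⬝ᵥ (Sn *ᵥ (βhat t - βn)) ≤
        ((βhat t₀ - βn) ⬝ᵥ (Sn *ᵥ (βhat t₀ - βn)))
          * Real.exp (-2 * ε₂ * lammin * (t - t₀)) := by
  intro lammin
  classical
  set V : ℝ → Fin d → ℝ := fun t =>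
    -((((∑ i, a i t ^ 2) • (1 : Matrix (Fin d) (Fin d) ℝ)
        + ∑ i, vecMulVec (w i t) (w i t))) *ᵥ (Sn *ᵥ (βhat t - βn))) with hV
  have hcoord : ∀ t j, HasDerivAt (fun s => βhat s j) (V t j) t := fun t j =>
    hasDerivAt_pi.1 (hODE t) j
  set g : ℝ → ℝ := fun t => (βhat t - βn) ⬝ᵥ (Sn *ᵥ (βhat t - βn)) with hgdef
  set g' : ℝ → ℝ := fun t => 2 * (V t ⬝ᵥ (Sn *ᵥ (βhat t - βn))) with hg'def
  have hsym : ∀ j k, Sn j k = Sn k j := by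
    intro j k
    have := congrFun (congrFun hpd.1 j) k
    simpa [Matrix.conjTranspose_apply] using this.symm
  -- derivative of g
  have hgderiv : ∀ t, HasDerivAt g (g' t) t := by
    intro t
    have hsumform : HasDerivAt
        (fun s => ∑ j, (βhat s j - βn j) * ∑ k, Sn j k * (βhat s k - βn k))
        (∑ j, (V t j * ∑ k, Sn j k * (βhat t k - βn k)
          + (βhat t j - βn j) * ∑ k, Sn j k * V t k)) t := by
      refine HasDerivAt.fun_sum fun j _ => ?_
      exact ((hcoord t j).sub_const _).mul
        (HasDerivAt.fun_sum fun k _ => ((hcoord t k).sub_const _).const_mul _)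
    have heq : g = fun s => ∑ j, (βhat s j - βn j) * ∑ k, Sn j k * (βhat s k - βn k) := by
      funext s
      simp [hgdef, dotProduct, Matrix.mulVec, Pi.sub_apply]
    have hval : (∑ j, (V t j * ∑ k, Sn j k * (βhat t k - βn k)
          + (βhat t j - βn j) * ∑ k, Sn j k * V t k)) = g' t := by
      have swap : ∑ j, (βhat t j - βn j) * ∑ k, Sn j k * V t k
          = ∑ j, V t j * ∑ k, Sn j k * (βhat t k - βn k) := by
        simp_rw [Finset.mul_sum]
        rw [Finset.sum_comm]
        refine Finset.sum_congr rfl fun k _ => Finset.sum_congr rfl fun j _ => ?_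
        rw [hsym j k]; ring
      rw [Finset.sum_add_distrib, swap, ← two_mul]
      have : V t ⬝ᵥ (Sn *ᵥ (βhat t - βn)) = ∑ j, V t j * ∑ k, Sn j k * (βhat t k - βn k) := by
        simp [dotProduct, Matrix.mulVec, Pi.sub_apply]
      rw [hg'def]
      simp only [this]
    rw [heq]
    exact hval ▸ hsumform
  -- the differential inequality
  set c : ℝ := 2 * ε₂ * lammin with hc
  have hstep2 : ∀ t ∈ Set.Icc t₀ t₁, g' t ≤ -c * g t := by
    intro t ht
    set x := βhat t - βn with hx
    set y := Sn *ᵥ x with hy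
    have h1 : ε₂ * (y ⬝ᵥ y) ≤ (((∑ i, a i t ^ 2) • (1 : Matrix (Fin d) (Fin d) ℝ)
        + ∑ i, vecMulVec (w i t) (w i t)) *ᵥ y) ⬝ᵥ y :=
      my_M_bound _ _ (hgrow t ht) _ _
    have h2 : lammin * (x ⬝ᵥ (Sn *ᵥ x)) ≤ y ⬝ᵥ y := my_eigen_bound hpd x
    have hVdot : V t ⬝ᵥ y = -((((∑ i, a i t ^ 2) • (1 : Matrix (Fin d) (Fin d) ℝ)
        + ∑ i, vecMulVec (w i t) (w i t)) *ᵥ y) ⬝ᵥ y) := by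
      rw [hV]
      exact neg_dotProduct _ _
    have hgt : g t = x ⬝ᵥ (Sn *ᵥ x) := rfl
    rw [hg'def]
    simp only []
    rw [hgt, hVdot, hc]
    nlinarith [mul_le_mul_of_nonneg_left h2 hε₂.le]
  -- Gronwall via antitonicity
  set h : ℝ → ℝ := fun t => g t * Real.exp (c * (t - t₀)) with hh
  have hhderiv : ∀ t, HasDerivAt h
      (g' t * Real.exp (c * (t - t₀)) + g t * (Real.exp (c * (t - t₀)) * (c * 1))) t := by
    intro t
    exact (hgderiv t).mul (((hasDerivAt_id t).sub_const t₀).const_mul c).exp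
  have hanti : AntitoneOn h (Set.Icc t₀ t₁) := by
    refine antitoneOn_of_deriv_nonpos (convex_Icc _ _)
      (Differentiable.continuous fun t => (hhderiv t).differentiableAt).continuousOn
      (fun t _ => ((hhderiv t).differentiableAt).differentiableWithinAt) ?_
    intro t ht
    rw [interior_Icc] at ht
    rw [(hhderiv t).deriv]
    have hb := hstep2 t ⟨ht.1.le, ht.2.le⟩
    have he := Real.exp_pos (c * (t - t₀))
    nlinarith [mul_le_mul_of_nonneg_right hb he.le]
  intro t ht
  have ht₀ : t₀ ∈ Set.Icc t₀ t₁ := ⟨le_refl _, ht.1.trans ht.2⟩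
  have key : g t * Real.exp (c * (t - t₀)) ≤ g t₀ := by
    have := hanti ht₀ ht ht.1
    simpa [hh] using this
  have hexp : -2 * ε₂ * lammin * (t - t₀) = -(c * (t - t₀)) := by rw [hc]; ring
  show g t ≤ g t₀ * Real.exp (-2 * ε₂ * lammin * (t - t₀))
  rw [hexp, Real.exp_neg]
  have hepos := Real.exp_pos (c * (t - t₀))
  calc g t = (g t * Real.exp (c * (t - t₀))) * (Real.exp (c * (t - t₀)))⁻¹ := by
        field_simp
    _ ≤ g t₀ * (Real.exp (c * (t - t₀)))⁻¹ :=
        mul_le_mul_of_nonneg_right key (inv_nonneg.mpr hepos.le)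
end
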